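/- Let n be a nonnegative integer and let a, b be elements of a commutative ring (in particular, integers or real numbers). Then Σ_{k=0}^{n} C(n,k) · C(n+k,k) · (a-b)^(n-k) · b^k = Σ_{k=0}^{n} C(n,k)² · a^(n-k) · b^k. -/

import Mathlib

open Finset Polynomial

theorem binomial_transform_identity {R : Type*} [CommRing R] (n : ℕ) (a b : R) :
    ∑ k ∈ range (n + 1),
        (Nat.choose n k : R) * (Nat.choose (n + k) k : R) * (a - b) ^ (n - k) * b ^ k =
      ∑ k ∈ range (n + 1), (Nat.choose n k : R) ^ 2 * a ^ (n - k) * b ^ k := by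
  have key1 : (((1 + X) ^ n * (C a + C b * X) ^ n : R[X])).coeff n =
      ∑ k ∈ range (n + 1), (Nat.choose n k : R) ^ 2 * a ^ (n - k) * b ^ k := by
    have e1 : (C a + C b * X : R[X]) ^ n =
        ∑ j ∈ range (n + 1), (C a) ^ (n - j) * (C b * X) ^ j * (n.choose j : R[X]) := by
      rw [add_comm, add_pow]
      exact Finset.sum_congr rfl fun j _ => by ring
    rw [e1, Finset.mul_sum, finset_sum_coeff]
    refine Finset.sum_congr rfl fun j hj => ?_
    have hj' : j ≤ n := Nat.lt_succ_iff.mp (mem_range.mp hj)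
    have h1 : (1 + X : R[X]) ^ n * ((C a) ^ (n - j) * (C b * X) ^ j * (n.choose j : R[X])) =
        C ((n.choose j : R) * a ^ (n - j) * b ^ j) * ((1 + X) ^ n * X ^ j) := by
      simp only [← C_eq_natCast, C_mul, C_pow, mul_pow]
      ring
    rw [h1, coeff_C_mul, coeff_mul_X_pow', if_pos hj', coeff_one_add_X_pow,
        Nat.choose_symm hj']
    ring
  have key2 : (((1 + X) ^ n * (C a + C b * X) ^ n : R[X])).coeff n =
      ∑ k ∈ range (n + 1),
        (Nat.choose n k : R) * (Nat.choose (n + k) k : R) * (a - b) ^ (n - k) * b ^ k := by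
    have hrw : (C a + C b * X : R[X]) = C (a - b) + C b * (1 + X) := by
      rw [C_sub]; ring
    have e1 : (C (a - b) + C b * (1 + X) : R[X]) ^ n =
        ∑ j ∈ range (n + 1), (C (a - b)) ^ (n - j) * (C b * (1 + X)) ^ j * (n.choose j : R[X]) := by
      rw [add_comm, add_pow]
      exact Finset.sum_congr rfl fun j _ => by ring
    rw [hrw, e1, Finset.mul_sum, finset_sum_coeff]
    refine Finset.sum_congr rfl fun k hk => ?_
    have h1 : (1 + X : R[X]) ^ n *
          ((C (a - b)) ^ (n - k) * (C b * (1 + X)) ^ k * (n.choose k : R[X])) =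
        C ((n.choose k : R) * (a - b) ^ (n - k) * b ^ k) * (1 + X) ^ (n + k) := by
      rw [pow_add]
      simp only [← C_eq_natCast, C_mul, C_pow, mul_pow]
      ring
    rw [h1, coeff_C_mul, coeff_one_add_X_pow]
    have h2 : (n + k).choose n = (n + k).choose k := by
      have := Nat.choose_symm (Nat.le_add_right k n)
      rw [add_comm k n] at this
      rw [← this, Nat.add_sub_cancel]
    rw [h2]; ring
  rw [← key2, key1]
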